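/- For every finite graph G, the matching width of G is at most the pathwidth of G plus one: mw(G) ≤ pw(G) + 1. -/

import Mathlib

/-- `M` is a matching of `G` all of whose edges cross the cut `(A, Aᶜ)`:
every element of `M` is an edge of `G` with one end in `A` and the other
outside `A`, and no two distinct elements of `M` share a vertex. -/
def IsCutMatching {V : Type} (G : SimpleGraph V) (A : Set V) (M : Finset (Sym2 V)) : Prop :=
  (∀ e ∈ M, e ∈ G.edgeSet) ∧
  (∀ e ∈ M, ∃ u v : V, e = s(u, v) ∧ u ∈ A ∧ v ∉ A) ∧
  (∀ e₁ ∈ M, ∀ e₂ ∈ M, e₁ ≠ e₂ → ∀ x : V, x ∈ e₁ → x ∉ e₂)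

/-- The matching width of `G` is at most `w`: some ordering of the vertices
is such that, for every prefix, every matching consisting of edges between
the prefix and the rest has size at most `w`. -/
def mwLE {V : Type} [Fintype V] (G : SimpleGraph V) (w : ℕ) : Prop :=
  ∃ σ : Fin (Fintype.card V) ≃ V,
    ∀ (i : ℕ) (M : Finset (Sym2 V)),
      IsCutMatching G {v : V | ((σ.symm v : Fin (Fintype.card V)) : ℕ) < i} M →
        M.card ≤ w

/-- The matching width of a finite graph. -/
noncomputable def mw {V : Type} [Fintype V] (G : SimpleGraph V) : ℕ :=
  sInf {w | mwLE G w}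

/-- `G` admits a path decomposition of width at most `w`: bags indexed by a
path `x_1, …, x_m` satisfying the union, containment and connectedness
(interval) conditions, all bags having at most `w + 1` vertices. -/
def PathwidthLE {V : Type} (G : SimpleGraph V) (w : ℕ) : Prop :=
  ∃ (m : ℕ) (B : Fin m → Finset V),
    (∀ v : V, ∃ i, v ∈ B i) ∧
    (∀ u v : V, G.Adj u v → ∃ i, u ∈ B i ∧ v ∈ B i) ∧
    (∀ (v : V) (i j k : Fin m), i ≤ j → j ≤ k → v ∈ B i → v ∈ B k → v ∈ B j) ∧
    (∀ i, (B i).card ≤ w + 1)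

/-- The pathwidth of a graph. -/
noncomputable def pw {V : Type} (G : SimpleGraph V) : ℕ :=
  sInf {w | PathwidthLE G w}

/-- For every finite graph `G`, `mw(G) ≤ pw(G) + 1`. -/
lemma key_mw {V : Type} [Fintype V] (G : SimpleGraph V) (w : ℕ)
    (h : PathwidthLE G w) : mwLE G (w + 1) := by
  classical
  obtain ⟨m, B, hcov, hedge, hconn, hcard⟩ := h
  set n := Fintype.card V with hn
  by_cases hV : Nonempty V
  · have hm : 0 < m := by
      obtain ⟨v⟩ := hV
      obtain ⟨j, _⟩ := hcov v
      exact j.pos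
    -- f v = index of leftmost bag containing v
    have hfex : ∀ v : V, (Finset.univ.filter (fun j => v ∈ B j)).Nonempty := by
      intro v
      obtain ⟨j, hj⟩ := hcov v
      exact ⟨j, by simp [hj]⟩
    let f : V → Fin m := fun v => (Finset.univ.filter (fun j => v ∈ B j)).min' (hfex v)
    have hf_mem : ∀ v, v ∈ B (f v) := by
      intro v
      have := (Finset.univ.filter (fun j => v ∈ B j)).min'_mem (hfex v)
      simpa using this
    have hf_le : ∀ v (j : Fin m), v ∈ B j → f v ≤ j := by
      intro v j hj
      exact Finset.min'_le _ j (by simp [hj])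
    let e0 : Fin n ≃ V := (Fintype.equivFin V).symm
    let g : Fin n → Fin m := fun k => f (e0 k)
    let σ : Fin n ≃ V := (Tuple.sort g).trans e0
    have hmono : Monotone (fun k => f (σ k)) := Tuple.monotone_sort g
    refine ⟨σ, ?_⟩
    intro i M hM
    obtain ⟨hM1, hM2, hM3⟩ := hM
    by_cases hi : i < n
    · set t : Fin m := f (σ ⟨i, hi⟩) with ht
      have hkey : ∀ e ∈ M, ∃ u : V, u ∈ e ∧ u ∈ B t := by
        intro e he
        obtain ⟨u, v, rfl, hu, hv⟩ := hM2 e he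
        have hadj : G.Adj u v := hM1 _ he
        obtain ⟨j, huj, hvj⟩ := hedge u v hadj
        have hu' : ((σ.symm u : Fin n) : ℕ) < i := hu
        have hv' : i ≤ ((σ.symm v : Fin n) : ℕ) := not_lt.mp hv
        have hfu : f u ≤ t := by
          have : σ.symm u ≤ (⟨i, hi⟩ : Fin n) := le_of_lt hu'
          have := hmono this
          simpa using this
        have htv : t ≤ f v := by
          have : (⟨i, hi⟩ : Fin n) ≤ σ.symm v := hv'
          have := hmono this
          simpa using this
        have htj : t ≤ j := le_trans htv (hf_le v j hvj)
        exact ⟨u, by simp, hconn u (f u) t j hfu htj (hf_mem u) huj⟩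
      choose uu hu1 hu2 using hkey
      calc M.card = M.attach.card := by rw [Finset.card_attach]
        _ ≤ (B t).card := by
            apply Finset.card_le_card_of_injOn (fun x => uu x.1 x.2)
            · intro x _
              exact hu2 x.1 x.2
            · intro x _ y _ hxy
              by_contra hne
              have hne' : (x : Sym2 V) ≠ (y : Sym2 V) := fun h => hne (Subtype.ext h)
              have := hM3 x.1 x.2 y.1 y.2 hne' (uu x.1 x.2) (hu1 x.1 x.2)
              have heq : uu x.1 x.2 = uu y.1 y.2 := hxy
              exact this (heq ▸ hu1 y.1 y.2)
        _ ≤ w + 1 := hcard t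
    · -- i ≥ n : every vertex is in the prefix, so M is empty
      have : M = ∅ := by
        rw [Finset.eq_empty_iff_forall_notMem]
        intro e he
        obtain ⟨u, v, rfl, hu, hv⟩ := hM2 e he
        exact hv (lt_of_lt_of_le (σ.symm v).isLt (not_lt.mp hi))
      simp [this]
  · refine ⟨(Fintype.equivFin V).symm, ?_⟩
    intro i M hM
    obtain ⟨hM1, hM2, hM3⟩ := hM
    have : M = ∅ := by
      rw [Finset.eq_empty_iff_forall_notMem]
      intro e he
      obtain ⟨u, v, _⟩ := hM2 e he
      exact hV ⟨u⟩
    simp [this]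

/-- For every finite graph `G`, `mw(G) ≤ pw(G) + 1`. -/
theorem stmt11 {V : Type} [Fintype V] (G : SimpleGraph V) : mw G ≤ pw G + 1 := by
  classical
  have htriv : PathwidthLE G (Fintype.card V) := by
    refine ⟨1, fun _ => Finset.univ, fun v => ⟨0, Finset.mem_univ v⟩,
      fun u v _ => ⟨0, Finset.mem_univ u, Finset.mem_univ v⟩,
      fun v i j k _ _ _ _ => Finset.mem_univ v, fun _ => ?_⟩
    simp [Finset.card_univ]
  have hpw : PathwidthLE G (pw G) := Nat.sInf_mem (s := {w | PathwidthLE G w}) ⟨_, htriv⟩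
  exact Nat.sInf_le (key_mw G (pw G) hpw)
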